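/- Let f : ℝ^d → ℝ be nonnegative and integrable. Suppose (Λⁿ) is a sequence of packing sets for f at level 1 (i.e., for each n, ∑_{λ∈Λⁿ} f(x−λ) ≤ 1 almost everywhere), and Λⁿ converges weakly to a set Λ (with a common separation constant δ > 0). Then Λ is a packing set: ∑_{λ∈Λ} f(x−λ) ≤ 1 almost everywhere. -/

import Mathlib

open MeasureTheory Filter Pointwise
open scoped Topology

noncomputable section

/-- The closed cube `[-R/2, R/2]^d`. -/
def cube (d : ℕ) (R : ℝ) : Set (Fin d → ℝ) := {y | ∀ i, |y i| ≤ R / 2}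

/-- The open cube `(-ε/2, ε/2)^d`. -/
def ocube (d : ℕ) (ε : ℝ) : Set (Fin d → ℝ) := {y | ∀ i, |y i| < ε / 2}

/-- `f + Λ` is a packing at level 1: `∑_{λ ∈ Λ} f(x - λ) ≤ 1` a.e. -/
def IsPacking {d : ℕ} (f : (Fin d → ℝ) → ℝ) (Λ : Set (Fin d → ℝ)) : Prop :=
  ∀ᵐ x : Fin d → ℝ, (∑' l : Λ, f (x - (l : Fin d → ℝ))) ≤ 1

/-- `Λ` is uniformly discrete with separation constant `δ`: distinct points are at
distance greater than `δ`. -/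
def Separated {d : ℕ} (δ : ℝ) (Λ : Set (Fin d → ℝ)) : Prop :=
  ∀ a ∈ Λ, ∀ b ∈ Λ, a ≠ b → δ < dist a b

/-- Weak convergence of the sets `Λⁿ` to `Λ`: for every `ε, R > 0`, eventually
`Λⁿ ∩ Q_R ⊆ Λ + Q_ε` and `Λ ∩ Q_R ⊆ Λⁿ + Q_ε`. -/
def WeakConv {d : ℕ} (Λn : ℕ → Set (Fin d → ℝ)) (Λ : Set (Fin d → ℝ)) : Prop :=
  ∀ ε > (0 : ℝ), ∀ R > (0 : ℝ), ∃ N : ℕ, ∀ n ≥ N,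
    Λn n ∩ cube d R ⊆ Λ + ocube d ε ∧ Λ ∩ cube d R ⊆ Λn n + ocube d ε

/-- The upper density of `Λ` is at least `c`: for every `ε > 0` there are arbitrarily
large `R` and a cube of side `R` containing at least `(c - ε) R^d` points of `Λ`. -/
def UpperDensGE {d : ℕ} (Λ : Set (Fin d → ℝ)) (c : ℝ) : Prop :=
  ∀ ε > (0 : ℝ), ∀ R₀ : ℝ, ∃ R > R₀, ∃ x : Fin d → ℝ,
    (((Λ ∩ {y | ∀ i, |y i - x i| ≤ R / 2}).ncard : ℝ)) ≥ (c - ε) * R ^ d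

namespace PackAux

variable {d : ℕ}

local notation "X" => Fin d → ℝ

/-- Translation continuity in L¹. -/
theorem tendsto_translate (f : X → ℝ) (hfi : Integrable f) :
    Tendsto (fun t : X => ∫⁻ x, (‖f (x + t) - f x‖₊ : ENNReal)) (𝓝 0) (𝓝 0) := by
  have fact : Fact ((1:ENNReal) ≤ 1) := ⟨le_refl _⟩
  set F : Lp ℝ 1 (volume : Measure X) := (memLp_one_iff_integrable.mpr hfi).toLp f with hF
  have hg : ∀ t : X, MeasurePreserving (fun x : X => x + t) volume volume :=
    fun t => measurePreserving_add_right volume t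
  have hgc : Continuous fun t : X => (⟨fun x => x + t, by continuity⟩ : C(X, X)) := by
    apply ContinuousMap.continuous_of_continuous_uncurry
    exact continuous_snd.add continuous_fst
  set G : X → Lp ℝ 1 (volume : Measure X) := fun t =>
    Lp.compMeasurePreserving (⟨fun x => x + t, by continuity⟩ : C(X, X)) (hg t) F with hG
  have key : Tendsto G (𝓝 0) (𝓝 (G 0)) :=
    Filter.Tendsto.compMeasurePreservingLp tendsto_const_nhds (hgc.tendsto 0) _ _
      ENNReal.one_ne_top
  have hdist : Tendsto (fun t => dist (G t) (G 0)) (𝓝 0) (𝓝 0) :=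
    tendsto_iff_dist_tendsto_zero.mp key
  have h0 : Tendsto (fun t => ENNReal.ofReal (dist (G t) (G 0))) (𝓝 0) (𝓝 0) := by
    have := (ENNReal.continuous_ofReal.tendsto 0).comp hdist
    simpa [Function.comp_def] using this
  refine h0.congr fun t => ?_
  -- identify the two quantities
  have hco : ∀ t : X, (G t : X → ℝ) =ᵐ[volume] fun x => f (x + t) := by
    intro t
    refine (Lp.coeFn_compMeasurePreserving F (hg t)).trans ?_
    have h1 : (F : X → ℝ) =ᵐ[volume] f := MemLp.coeFn_toLp _
    have h2 : (F : X → ℝ) ∘ (fun x : X => x + t) =ᵐ[volume] f ∘ (fun x : X => x + t) := by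
      apply MeasureTheory.ae_eq_comp (μ := volume) (hg t).aemeasurable
      rwa [(hg t).map_eq]
    exact h2
  have hsub : (fun x => (G t : X → ℝ) x - (G 0 : X → ℝ) x) =ᵐ[volume]
      fun x => f (x + t) - f x := by
    filter_upwards [hco t, hco 0] with x h1 h2
    rw [h1, h2, add_zero]
  have e1 : eLpNorm (⇑(G t) - ⇑(G 0)) 1 volume = eLpNorm (fun x => f (x + t) - f x) 1 volume :=
    eLpNorm_congr_ae hsub
  have e2 : eLpNorm (⇑(G t) - ⇑(G 0)) 1 volume ≠ ⊤ := by
    rw [← eLpNorm_congr_ae (Lp.coeFn_sub (G t) (G 0))]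
    exact Lp.eLpNorm_ne_top _
  rw [Lp.dist_def, ENNReal.ofReal_toReal e2, e1]; exact eLpNorm_one_eq_lintegral_enorm

/-- A `δ`-separated set is countable. -/
theorem sep_countable {δ : ℝ} (hδ : 0 < δ) {Λ : Set (Fin d → ℝ)}
    (hsep : ∀ a ∈ Λ, ∀ b ∈ Λ, a ≠ b → δ < dist a b) : Λ.Countable := by
  apply Set.PairwiseDisjoint.countable_of_isOpen (s := fun x : X => Metric.ball x (δ / 2))
  · intro a ha b hb hab
    apply Metric.ball_disjoint_ball
    rw [← add_div, add_self_div_two]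
    exact (hsep a ha b hb hab).le
  · exact fun i _ => Metric.isOpen_ball
  · exact fun i _ => Metric.nonempty_ball.2 (half_pos hδ)

/-- Counting bound for a `δ`-separated set in a ball. -/
theorem count_bound {δ : ℝ} (hδ : 0 < δ) {Λ : Set (Fin d → ℝ)}
    (hsep : ∀ a ∈ Λ, ∀ b ∈ Λ, a ≠ b → δ < dist a b) [Countable Λ] (R : ℝ) (c : X) :
    ∑' l : Λ, (Metric.ball c R).indicator (1 : X → ENNReal) ↑l ≤
      volume (Metric.ball (0 : X) (R + δ / 2)) / volume (Metric.ball (0 : X) (δ / 2)) := by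
  classical
  set v := volume (Metric.ball (0 : X) (δ / 2)) with hv
  have hv0 : v ≠ 0 := (Metric.measure_ball_pos volume _ (half_pos hδ)).ne'
  have hvt : v ≠ ⊤ := measure_ball_lt_top.ne
  rw [ENNReal.le_div_iff_mul_le (Or.inl hv0) (Or.inl hvt)]
  set S : Λ → Set X := fun l =>
    if (l : X) ∈ Metric.ball c R then Metric.ball (l : X) (δ / 2) else ∅ with hS
  have hSvol : ∀ l : Λ, volume (S l) = (Metric.ball c R).indicator (1 : X → ENNReal) ↑l * v := by
    intro l
    simp only [hS]
    by_cases h : (l : X) ∈ Metric.ball c R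
    · rw [if_pos h, Set.indicator_of_mem h, Pi.one_apply, one_mul,
        Measure.addHaar_ball_center volume _ _]
    · rw [if_neg h, Set.indicator_of_notMem h, zero_mul, measure_empty]
  have hdisj : Pairwise (Function.onFun Disjoint S) := by
    intro a b hab
    have hab' : (a : X) ≠ (b : X) := Subtype.coe_injective.ne hab
    have : Disjoint (Metric.ball (a : X) (δ / 2)) (Metric.ball (b : X) (δ / 2)) := by
      apply Metric.ball_disjoint_ball
      rw [← add_div, add_self_div_two]
      exact (hsep a a.2 b b.2 hab').le
    simp only [Function.onFun, hS]
    split_ifs <;> simp [this]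
  have hmeas : ∀ l : Λ, MeasurableSet (S l) := by
    intro l; simp only [hS]; split_ifs <;> simp [Metric.isOpen_ball.measurableSet]
  have hsub : (⋃ l : Λ, S l) ⊆ Metric.ball c (R + δ / 2) := by
    rintro x hx
    simp only [Set.mem_iUnion] at hx
    obtain ⟨l, hl⟩ := hx
    simp only [hS] at hl
    split_ifs at hl with h
    · have h1 : dist x (l : X) < δ / 2 := Metric.mem_ball.1 hl
      have h2 : dist (l : X) c < R := Metric.mem_ball.1 h
      exact Metric.mem_ball.2 (lt_of_le_of_lt (dist_triangle x (l : X) c) (by linarith))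
    · exact absurd hl (Set.notMem_empty x)
  calc (∑' l : Λ, (Metric.ball c R).indicator (1 : X → ENNReal) ↑l) * v
      = ∑' l : Λ, volume (S l) := by
        rw [← ENNReal.tsum_mul_right]; exact tsum_congr fun l => (hSvol l).symm
    _ = volume (⋃ l : Λ, S l) := (measure_iUnion hdisj hmeas).symm
    _ ≤ volume (Metric.ball c (R + δ / 2)) := measure_mono hsub
    _ = volume (Metric.ball (0 : X) (R + δ / 2)) := Measure.addHaar_ball_center volume c _

/-- For a `δ`-separated set and integrable nonnegative `f`, the periodization is a.e. summable. -/
theorem ae_summable {δ : ℝ} (hδ : 0 < δ) {Λ : Set (Fin d → ℝ)}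
    (hsep : ∀ a ∈ Λ, ∀ b ∈ Λ, a ≠ b → δ < dist a b)
    (f : (Fin d → ℝ) → ℝ) (hf0 : ∀ x, 0 ≤ f x) (hfi : Integrable f) :
    ∀ᵐ x : X, Summable (fun l : Λ => f (x - ↑l)) := by
  haveI := (sep_countable hδ hsep).to_subtype
  set T : X → ENNReal := fun x => ∑' l : Λ, ENNReal.ofReal (f (x - ↑l)) with hT
  have hmf : ∀ l : Λ, AEMeasurable (fun x : X => ENNReal.ofReal (f (x - ↑l))) volume := by
    intro l
    exact ENNReal.measurable_ofReal.comp_aemeasurable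
      (hfi.aemeasurable.comp_quasiMeasurePreserving
        (measurePreserving_sub_right (volume : Measure (Fin d → ℝ)) (↑l)).quasiMeasurePreserving)
  have hmT : AEMeasurable T volume := AEMeasurable.ennreal_tsum hmf
  have key : ∀ n : ℕ, ∀ᵐ x ∂(volume.restrict (Metric.ball (0 : X) ((n : ℝ) + 1))), T x < ⊤ := by
    intro n
    set B := Metric.ball (0 : X) ((n : ℝ) + 1) with hB
    have hBm : MeasurableSet B := Metric.isOpen_ball.measurableSet
    apply ae_lt_top' hmT.restrict
    set N := volume (Metric.ball (0 : X) (((n : ℝ) + 1) + δ / 2)) /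
      volume (Metric.ball (0 : X) (δ / 2)) with hN
    have hNt : N ≠ ⊤ := (ENNReal.div_lt_top measure_ball_lt_top.ne
      (Metric.measure_ball_pos volume _ (half_pos hδ)).ne').ne
    have calc2 : ∀ l : Λ, ∫⁻ x in B, ENNReal.ofReal (f (x - ↑l)) ∂volume
        = ∫⁻ y, B.indicator (1 : X → ENNReal) (y + ↑l) * ENNReal.ofReal (f y) ∂volume := by
      intro l
      rw [← lintegral_indicator hBm,
        ← lintegral_add_right_eq_self
          (fun x => B.indicator (fun x => ENNReal.ofReal (f (x - ↑l))) x) (↑l)]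
      congr 1; funext y
      by_cases h : y + ↑l ∈ B
      · rw [Set.indicator_of_mem h, Set.indicator_of_mem h, Pi.one_apply, one_mul,
          add_sub_cancel_right]
      · rw [Set.indicator_of_notMem h, Set.indicator_of_notMem h, zero_mul]
    have hm2 : ∀ l : Λ, AEMeasurable
        (fun y : X => B.indicator (1 : X → ENNReal) (y + ↑l) * ENNReal.ofReal (f y)) volume := by
      intro l
      exact (((measurable_one.indicator hBm).comp (measurable_add_const (↑l : X))).aemeasurable).mul
        (ENNReal.measurable_ofReal.comp_aemeasurable hfi.aemeasurable)
    have calc3 : ∫⁻ x in B, T x ∂volume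
        = ∫⁻ y, (∑' l : Λ, B.indicator (1 : X → ENNReal) (y + ↑l)) * ENNReal.ofReal (f y)
          ∂volume := by
      rw [hT, lintegral_tsum fun l => (hmf l).restrict, tsum_congr calc2,
        ← lintegral_tsum hm2]
      congr 1; funext y
      rw [ENNReal.tsum_mul_right]
    have hcount : ∀ y : X, (∑' l : Λ, B.indicator (1 : X → ENNReal) (y + ↑l)) ≤ N := by
      intro y
      have heq : ∀ l : Λ, B.indicator (1 : X → ENNReal) (y + ↑l)
          = (Metric.ball (-y) ((n : ℝ) + 1)).indicator (1 : X → ENNReal) ↑l := by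
        intro l
        have hmem : (y + ↑l ∈ B) ↔ ((l : X) ∈ Metric.ball (-y) ((n : ℝ) + 1)) := by
          rw [hB, Metric.mem_ball, Metric.mem_ball, dist_eq_norm, dist_eq_norm, sub_zero,
            sub_neg_eq_add, add_comm]
        by_cases h : y + ↑l ∈ B
        · simp [Set.indicator_of_mem h, Set.indicator_of_mem (hmem.1 h)]
        · simp [Set.indicator_of_notMem h,
            Set.indicator_of_notMem (fun hc => h (hmem.2 hc))]
      rw [tsum_congr heq]
      exact count_bound hδ hsep ((n : ℝ) + 1) (-y)
    rw [calc3]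
    have : ∫⁻ y, (∑' l : Λ, B.indicator (1 : X → ENNReal) (y + ↑l)) * ENNReal.ofReal (f y) ∂volume
        ≤ ∫⁻ y, N * ENNReal.ofReal (f y) ∂volume :=
      lintegral_mono fun y => mul_le_mul_left (hcount y) _
    refine (lt_of_le_of_lt this ?_).ne
    rw [lintegral_const_mul' _ _ hNt]
    exact ENNReal.mul_lt_top hNt.lt_top hfi.lintegral_lt_top
  have main : ∀ᵐ x : X, T x < ⊤ := by
    have h1 : ∀ᵐ x : X, ∀ n : ℕ, x ∈ Metric.ball (0 : X) ((n : ℝ) + 1) → T x < ⊤ :=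
      ae_all_iff.2 fun n => ae_imp_of_ae_restrict (key n)
    filter_upwards [h1] with x hx
    obtain ⟨n, hn⟩ := exists_nat_gt ‖x‖
    exact hx n (Metric.mem_ball.2 (by rw [dist_zero_right]; linarith))
  filter_upwards [main] with x hx
  exact (ENNReal.summable_toReal hx.ne).congr fun l => ENNReal.toReal_ofReal (hf0 _)

end PackAux

open PackAux in
theorem finset_packing_aux {d : ℕ} (f : (Fin d → ℝ) → ℝ)
    (hf0 : ∀ x, 0 ≤ f x) (hfi : Integrable f)
    (Λn : ℕ → Set (Fin d → ℝ)) (Λ : Set (Fin d → ℝ)) (δ : ℝ) (hδ : 0 < δ)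
    (hsepn : ∀ n, Separated δ (Λn n)) (hsep : Separated δ Λ)
    (hpack : ∀ n, IsPacking f (Λn n)) (hconv : WeakConv Λn Λ)
    (T : Finset (Fin d → ℝ)) (hT : ↑T ⊆ Λ) :
    ∀ᵐ x : Fin d → ℝ, ∑ l ∈ T, f (x - l) ≤ 1 := by
  classical
  rcases T.eq_empty_or_nonempty with rfl | hTne
  · exact Filter.Eventually.of_forall fun x => by simp
  -- a cube containing T
  obtain ⟨R, hR0, hRT⟩ : ∃ R > (0 : ℝ), ∀ l ∈ T, l ∈ cube d R := by
    set M := T.sup' hTne (fun l => ‖l‖) with hM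
    obtain ⟨l0, hl0⟩ := hTne
    have hM0 : 0 ≤ M := le_trans (norm_nonneg l0) (Finset.le_sup' _ hl0)
    refine ⟨2 * M + 2, by linarith, fun l hl i => ?_⟩
    have h1 : |l i| ≤ ‖l‖ := by
      rw [← Real.norm_eq_abs]; exact norm_le_pi_norm l i
    have h2 : ‖l‖ ≤ M := Finset.le_sup' _ hl
    have : (2 * M + 2) / 2 = M + 1 := by ring
    rw [this]; linarith
  -- small separations
  set ε : ℕ → ℝ := fun j => min (δ / 2) (1 / (j + 1)) with hε
  have hεpos : ∀ j, 0 < ε j := fun j => lt_min (half_pos hδ) (by positivity)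
  have hεδ : ∀ j, ε j ≤ δ / 2 := fun j => min_le_left _ _
  have hεj : ∀ j : ℕ, ε j ≤ 1 / (j + 1) := fun j => min_le_right _ _
  -- choose indices from weak convergence
  choose N hN using fun j => hconv (ε j) (hεpos j) R hR0
  have hmem : ∀ j, Λ ∩ cube d R ⊆ Λn (N j) + ocube d (ε j) :=
    fun j => (hN j (N j) le_rfl).2
  -- approximating points
  have hex : ∀ j : ℕ, ∀ l : Fin d → ℝ, l ∈ T → ∃ q, q ∈ Λn (N j) ∧ dist q l < ε j := by
    intro j l hl
    obtain ⟨q, hq, w, hw, rfl⟩ := hmem j ⟨hT hl, hRT l hl⟩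
    refine ⟨q, hq, ?_⟩
    have : dist q (q + w) = ‖w‖ := by rw [dist_self_add_right]
    rw [this, pi_norm_lt_iff (hεpos j)]
    intro i
    calc ‖w i‖ = |w i| := Real.norm_eq_abs _
      _ < ε j / 2 := hw i
      _ < ε j := half_lt_self (hεpos j)
  choose p hp1 hp2 using hex
  -- the approximating sums are a.e. bounded by 1
  have ha : ∀ j : ℕ, ∀ᵐ x : Fin d → ℝ,
      ∑ l ∈ T.attach, f (x - p j ↑l l.2) ≤ 1 := by
    intro j
    haveI : Countable ↥(Λn (N j)) := (sep_countable hδ (hsepn (N j))).to_subtype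
    filter_upwards [hpack (N j), ae_summable hδ (hsepn (N j)) f hf0 hfi] with x hx hsum
    have hinj : ∀ a ∈ T.attach, ∀ b ∈ T.attach,
        (⟨p j ↑a a.2, hp1 j ↑a a.2⟩ : ↥(Λn (N j))) = ⟨p j ↑b b.2, hp1 j ↑b b.2⟩ → a = b := by
      intro a _ b _ hab
      by_contra hne
      have hco : (↑a : Fin d → ℝ) ≠ ↑b := fun h => hne (Subtype.ext h)
      have hd : δ < dist (↑a : Fin d → ℝ) ↑b := hsep ↑a (hT a.2) ↑b (hT b.2) hco
      have hpe : p j ↑a a.2 = p j ↑b b.2 := by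
        simpa using hab
      have : dist (↑a : Fin d → ℝ) ↑b ≤ dist (↑a : Fin d → ℝ) (p j ↑a a.2)
          + dist (p j ↑b b.2) ↑b := by
        rw [← hpe]; exact dist_triangle _ _ _
      have h1 : dist (↑a : Fin d → ℝ) (p j ↑a a.2) < ε j := by
        rw [dist_comm]; exact hp2 j ↑a a.2
      have h2 : dist (p j ↑b b.2) (↑b : Fin d → ℝ) < ε j := hp2 j ↑b b.2
      have := hεδ j
      linarith
    set s : Finset ↥(Λn (N j)) :=
      T.attach.image (fun l : {y // y ∈ T} => ⟨p j ↑l l.2, hp1 j ↑l l.2⟩) with hs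
    have heq : ∑ l ∈ s, f (x - ↑l) = ∑ l ∈ T.attach, f (x - p j ↑l l.2) :=
      Finset.sum_image (f := fun y : ↥(Λn (N j)) => f (x - ↑y)) hinj
    calc ∑ l ∈ T.attach, f (x - p j ↑l l.2) = ∑ l ∈ s, f (x - ↑l) := heq.symm
      _ ≤ ∑' l : ↥(Λn (N j)), f (x - ↑l) := Summable.sum_le_tsum s (fun i _ => hf0 _) hsum
      _ ≤ 1 := hx
  -- the L¹ errors tend to zero
  have hterm : ∀ l : {y // y ∈ T}, Filter.Tendsto
      (fun j => ∫⁻ x, (‖f (x - p j ↑l l.2) - f (x - ↑l)‖₊ : ENNReal)) Filter.atTop (nhds 0) := by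
    intro l
    have ht : Filter.Tendsto (fun j => ((↑l : Fin d → ℝ) - p j ↑l l.2)) Filter.atTop (nhds 0) := by
      rw [tendsto_zero_iff_norm_tendsto_zero]
      refine squeeze_zero (fun j => norm_nonneg _) (fun j => ?_)
        tendsto_one_div_add_atTop_nhds_zero_nat
      have : ‖(↑l : Fin d → ℝ) - p j ↑l l.2‖ = dist (p j ↑l l.2) (↑l : Fin d → ℝ) := by
        rw [dist_eq_norm, norm_sub_rev]
      rw [this]
      exact le_trans (hp2 j ↑l l.2).le (hεj j)
    have hcomp := (tendsto_translate f hfi).comp ht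
    refine hcomp.congr fun j => ?_
    show (∫⁻ x, (‖f (x + ((↑l : Fin d → ℝ) - p j ↑l l.2)) - f x‖₊ : ENNReal))
        = ∫⁻ x, (‖f (x - p j ↑l l.2) - f (x - ↑l)‖₊ : ENNReal)
    rw [← lintegral_add_right_eq_self
      (fun y => (‖f (y - p j ↑l l.2) - f (y - (↑l : Fin d → ℝ))‖₊ : ENNReal)) (↑l : Fin d → ℝ)]
    congr 1; funext x
    rw [add_sub_cancel_right, add_sub_assoc]
  set A : ℕ → ENNReal := fun j =>
    ∑ l ∈ T.attach, ∫⁻ x, (‖f (x - p j ↑l l.2) - f (x - ↑l)‖₊ : ENNReal) with hA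
  have hA0 : Filter.Tendsto A Filter.atTop (nhds 0) := by
    have := tendsto_finset_sum T.attach (fun l _ => hterm l)
    simpa using this
  -- measurability helpers
  have hms : ∀ a : Fin d → ℝ, AEStronglyMeasurable (fun x : Fin d → ℝ => f (x - a)) volume := by
    intro a
    exact hfi.aestronglyMeasurable.comp_quasiMeasurePreserving
      (measurePreserving_sub_right (volume : Measure (Fin d → ℝ)) a).quasiMeasurePreserving
  have hIle : ∀ j : ℕ, (∫⁻ x, ENNReal.ofReal ((∑ l ∈ T, f (x - l)) - 1)) ≤ A j := by
    intro j
    have hpt : ∀ᵐ x : Fin d → ℝ, ENNReal.ofReal ((∑ l ∈ T, f (x - l)) - 1)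
        ≤ ∑ l ∈ T.attach, (‖f (x - p j ↑l l.2) - f (x - ↑l)‖₊ : ENNReal) := by
      filter_upwards [ha j] with x hx
      have e1 : ∑ l ∈ T, f (x - l) = ∑ l ∈ T.attach, f (x - ↑l) :=
        (Finset.sum_attach T fun l => f (x - l)).symm
      have e2 : (∑ l ∈ T, f (x - l)) - 1 ≤
          ∑ l ∈ T.attach, (f (x - ↑l) - f (x - p j ↑l l.2)) := by
        rw [Finset.sum_sub_distrib, ← e1]
        have := hx
        linarith
      calc ENNReal.ofReal ((∑ l ∈ T, f (x - l)) - 1)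
          ≤ ENNReal.ofReal (∑ l ∈ T.attach, (f (x - ↑l) - f (x - p j ↑l l.2))) :=
            ENNReal.ofReal_le_ofReal e2
        _ ≤ ENNReal.ofReal (∑ l ∈ T.attach, |f (x - ↑l) - f (x - p j ↑l l.2)|) :=
            ENNReal.ofReal_le_ofReal
              (Finset.sum_le_sum fun l _ => le_abs_self _)
        _ = ∑ l ∈ T.attach, ENNReal.ofReal |f (x - ↑l) - f (x - p j ↑l l.2)| :=
            ENNReal.ofReal_sum_of_nonneg fun l _ => abs_nonneg _
        _ = ∑ l ∈ T.attach, (‖f (x - p j ↑l l.2) - f (x - ↑l)‖₊ : ENNReal) := by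
            refine Finset.sum_congr rfl fun l _ => ?_
            rw [← Real.norm_eq_abs, norm_sub_rev, ← ENNReal.ofReal_coe_nnreal, coe_nnnorm]
    calc (∫⁻ x, ENNReal.ofReal ((∑ l ∈ T, f (x - l)) - 1))
        ≤ ∫⁻ x, ∑ l ∈ T.attach, (‖f (x - p j ↑l l.2) - f (x - ↑l)‖₊ : ENNReal) :=
          lintegral_mono_ae hpt
      _ = A j := lintegral_finset_sum' T.attach fun l _ =>
          (((hms (p j ↑l l.2)).sub (hms ↑l)).enorm)
  have hI0 : (∫⁻ x, ENNReal.ofReal ((∑ l ∈ T, f (x - l)) - 1)) = 0 :=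
    le_antisymm (ge_of_tendsto' hA0 hIle) zero_le
  have hgm : AEMeasurable (fun x => ENNReal.ofReal ((∑ l ∈ T, f (x - l)) - 1)) volume := by
    apply ENNReal.measurable_ofReal.comp_aemeasurable
    apply AEMeasurable.sub _ aemeasurable_const
    exact Finset.aemeasurable_fun_sum T fun l _ => (hms l).aemeasurable
  have := (lintegral_eq_zero_iff' hgm).1 hI0
  filter_upwards [this] with x hx
  have : ENNReal.ofReal ((∑ l ∈ T, f (x - l)) - 1) = 0 := hx
  have := ENNReal.ofReal_eq_zero.1 this
  linarith

theorem packing_of_weak_limit {d : ℕ} (f : (Fin d → ℝ) → ℝ)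
    (hf0 : ∀ x, 0 ≤ f x) (hfi : Integrable f)
    (Λn : ℕ → Set (Fin d → ℝ)) (Λ : Set (Fin d → ℝ)) (δ : ℝ) (hδ : 0 < δ)
    (hsepn : ∀ n, Separated δ (Λn n)) (hsep : Separated δ Λ)
    (hpack : ∀ n, IsPacking f (Λn n)) (hconv : WeakConv Λn Λ) :
    IsPacking f Λ := by
  classical
  rcases Set.eq_empty_or_nonempty Λ with rfl | hne
  · refine Filter.Eventually.of_forall fun x => ?_
    haveI : IsEmpty ↥(∅ : Set (Fin d → ℝ)) := Set.isEmpty_coe_sort.2 rfl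
    rw [tsum_empty]
    exact zero_le_one
  obtain ⟨e, he⟩ := (PackAux.sep_countable hδ hsep).exists_eq_range hne
  have hsub : ∀ k : ℕ, ↑((Finset.range k).image e) ⊆ Λ := by
    intro k l hl
    simp only [Finset.coe_image, Set.mem_image] at hl
    obtain ⟨i, _, rfl⟩ := hl
    rw [he]; exact Set.mem_range_self i
  have H : ∀ᵐ x : Fin d → ℝ, ∀ k : ℕ, ∑ l ∈ (Finset.range k).image e, f (x - l) ≤ 1 :=
    ae_all_iff.2 fun k =>
      finset_packing_aux f hf0 hfi Λn Λ δ hδ hsepn hsep hpack hconv _ (hsub k)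
  filter_upwards [H] with x hx
  by_cases hs : Summable (fun l : Λ => f (x - (l : Fin d → ℝ)))
  · refine Summable.tsum_le_of_sum_le hs fun s => ?_
    have hix : ∀ l : Λ, ∃ i : ℕ, e i = ↑l := by
      intro l
      have h2 : (l : Fin d → ℝ) ∈ Set.range e := by rw [← he]; exact l.2
      exact h2
    choose idx hidx using hix
    set k := (s.sup idx) + 1 with hk
    have hsse : ∀ l ∈ s, (↑l : Fin d → ℝ) ∈ (Finset.range k).image e := by
      intro l hl
      exact Finset.mem_image.2 ⟨idx l,
        Finset.mem_range.2 (Nat.lt_succ_of_le (Finset.le_sup hl)), hidx l⟩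
    calc ∑ l ∈ s, f (x - (l : Fin d → ℝ))
        = ∑ y ∈ s.image (fun l : Λ => (l : Fin d → ℝ)), f (x - y) :=
          (Finset.sum_image (f := fun y => f (x - y)) fun a _ b _ h => Subtype.coe_injective h).symm
      _ ≤ ∑ y ∈ (Finset.range k).image e, f (x - y) := by
          refine Finset.sum_le_sum_of_subset_of_nonneg ?_ fun i _ _ => hf0 _
          intro y hy
          obtain ⟨l, hl, rfl⟩ := Finset.mem_image.1 hy
          exact hsse l hl
      _ ≤ 1 := hx k
  · rw [tsum_eq_zero_of_not_summable hs]
    exact zero_le_one
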